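/- The space Q^∞ has infinite asymptotic dimension: for every n ∈ ℕ there exists R > 0 such that for every countable family (U_i)_{i∈ℕ} of open subsets of Q^∞ covering Q^∞ whose diameters are uniformly bounded (i.e. there exists D with diam(U_i) ≤ D for all i), there exists a point x ∈ Q^∞ such that the open ball of radius R centered at x has nonempty intersection with at least n + 2 of the sets U_i. -/

import Mathlib

/-- `Qinf` is the space of finitely supported sequences of `0`s and `1`s
(indexed by the natural numbers), i.e. sequences that are eventually `0`. -/
abbrev Qinf : Type := ℕ →₀ ZMod 2

/-- The ℓ¹ distance on `Qinf`: the number of indices where the two sequences differ. -/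
noncomputable def Qdist (a b : Qinf) : ℕ := (a - b).support.card

/-! ### Points and steps -/

abbrev Pt := ℕ →₀ ℕ

noncomputable def stepf (j : ℕ) (v : Pt) : Pt := v + Finsupp.single j 1 - Finsupp.single (j-1) 1

lemma stepf_apply (j : ℕ) (v : Pt) (x : ℕ) :
    (stepf j v) x = v x + (if j = x then 1 else 0) - (if j - 1 = x then 1 else 0) := by
  simp [stepf, Finsupp.tsub_apply, Finsupp.add_apply, Finsupp.single_apply]

lemma stepf_self (j : ℕ) (hj : 1 ≤ j) (v : Pt) : (stepf j v) j = v j + 1 := by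
  rw [stepf_apply]; have : j - 1 ≠ j := by omega
  simp [this]

lemma stepf_pred (j : ℕ) (hj : 1 ≤ j) (v : Pt) : (stepf j v) (j-1) = v (j-1) - 1 := by
  rw [stepf_apply]; have : j ≠ j - 1 := by omega
  simp [this]

lemma stepf_other (j : ℕ) (v : Pt) (x : ℕ) (h1 : x ≠ j) (h2 : x ≠ j - 1) :
    (stepf j v) x = v x := by
  rw [stepf_apply]; simp [Ne.symm h1, Ne.symm h2]

noncomputable def unstepf (j : ℕ) (v : Pt) : Pt := v + Finsupp.single (j-1) 1 - Finsupp.single j 1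

lemma unstepf_apply (j : ℕ) (v : Pt) (x : ℕ) :
    (unstepf j v) x = v x + (if j - 1 = x then 1 else 0) - (if j = x then 1 else 0) := by
  simp [unstepf, Finsupp.tsub_apply, Finsupp.add_apply, Finsupp.single_apply]

lemma unstepf_stepf (j : ℕ) (hj : 1 ≤ j) (v : Pt) (hv : 1 ≤ v (j-1)) :
    unstepf j (stepf j v) = v := by
  ext x
  rw [unstepf_apply, stepf_apply]
  rcases eq_or_ne x j with rfl | h1
  · have : x - 1 ≠ x := by omega
    simp [this]
  · rcases eq_or_ne x (j-1) with rfl | h2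
    · have : j ≠ j - 1 := by omega
      simp [this, Ne.symm h1]; omega
    · simp [Ne.symm h1, Ne.symm h2]

lemma stepf_unstepf (j : ℕ) (hj : 1 ≤ j) (v : Pt) (hv : 1 ≤ v j) :
    stepf j (unstepf j v) = v := by
  ext x
  rw [stepf_apply, unstepf_apply]
  rcases eq_or_ne x j with rfl | h1
  · have : x - 1 ≠ x := by omega
    simp [this]; omega
  · rcases eq_or_ne x (j-1) with rfl | h2
    · have : j ≠ j - 1 := by omega
      simp [this, Ne.symm h1]
    · simp [Ne.symm h1, Ne.symm h2]

lemma stepf_comm (a b : ℕ) (ha : 1 ≤ a) (hb : 1 ≤ b) (hab : a ≠ b) (v : Pt)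
    (hva : 1 ≤ v (a-1)) (hvb : 1 ≤ v (b-1)) :
    stepf b (stepf a v) = stepf a (stepf b v) := by
  ext x
  simp only [stepf_apply]
  rcases eq_or_ne (a-1) x with rfl | h1
  · have hax : a ≠ a - 1 := by omega
    have hbx : b - 1 ≠ a - 1 := by omega
    simp only [if_neg hax, if_neg hbx, if_pos rfl]
    split_ifs <;> omega
  · rcases eq_or_ne (b-1) x with rfl | h2
    · have hbb : b ≠ b - 1 := by omega
      simp only [if_neg hbb, if_neg h1, if_pos rfl]
      split_ifs <;> omega
    · simp only [if_neg h1, if_neg h2]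
      split_ifs <;> omega

/-! ### The grid -/

def TT (m N : ℕ) : Finset Pt := (Finset.range (m+1)).finsuppAntidiag N

lemma mem_TT {m N : ℕ} {v : Pt} :
    v ∈ TT m N ↔ (∑ x ∈ Finset.range (m+1), v x) = N ∧ v.support ⊆ Finset.range (m+1) := by
  simp [TT, Finset.mem_finsuppAntidiag]

lemma TT_mono {m N : ℕ} : TT m N ⊆ TT (m+1) N := by
  intro v hv
  rw [mem_TT] at hv ⊢
  have hsupp : v.support ⊆ Finset.range (m+1+1) :=
    hv.2.trans (Finset.range_subset_range.mpr (by omega))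
  refine ⟨?_, hsupp⟩
  rw [Finset.sum_range_succ, ← hv.1]
  have : v (m+1) = 0 := by
    by_contra h
    exact absurd (Finset.mem_range.mp (hv.2 (Finsupp.mem_support_iff.mpr h))) (by omega)
  omega

lemma apply_eq_zero_of_mem_TT {m N : ℕ} {v : Pt} (hv : v ∈ TT m N) {x : ℕ} (hx : m + 1 ≤ x) :
    v x = 0 := by
  by_contra h
  exact absurd (Finset.mem_range.mp ((mem_TT.mp hv).2 (Finsupp.mem_support_iff.mpr h))) (by omega)

lemma stepf_mem_TT {m N : ℕ} {v : Pt} (hv : v ∈ TT m N) {j : ℕ} (hj1 : 1 ≤ j) (hjm : j ≤ m)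
    (hval : 1 ≤ v (j-1)) : stepf j v ∈ TT m N := by
  rw [mem_TT] at hv ⊢
  constructor
  · rw [← hv.1]
    have hjmem : j ∈ Finset.range (m+1) := Finset.mem_range.mpr (by omega)
    have hj1mem : j - 1 ∈ Finset.range (m+1) := Finset.mem_range.mpr (by omega)
    have hne : j - 1 ≠ j := by omega
    rw [← Finset.sum_erase_add _ _ hjmem, ← Finset.sum_erase_add _ _ hjmem]
    have hj1mem' : j - 1 ∈ (Finset.range (m+1)).erase j := Finset.mem_erase.mpr ⟨hne, hj1mem⟩
    rw [← Finset.sum_erase_add _ _ hj1mem', ← Finset.sum_erase_add _ _ hj1mem']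
    have h1 : ∑ x ∈ ((Finset.range (m+1)).erase j).erase (j-1), (stepf j v) x
        = ∑ x ∈ ((Finset.range (m+1)).erase j).erase (j-1), v x := by
      refine Finset.sum_congr rfl fun x hx => ?_
      rw [Finset.mem_erase, Finset.mem_erase] at hx
      exact stepf_other j v x hx.2.1 hx.1
    rw [h1, stepf_self j hj1, stepf_pred j hj1]
    omega
  · intro x hx
    rw [Finsupp.mem_support_iff] at hx
    by_contra hxr
    have hxj : x ≠ j := by
      intro h; exact hxr (h ▸ Finset.mem_range.mpr (by omega))
    have hxj1 : x ≠ j - 1 := by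
      intro h; exact hxr (h ▸ Finset.mem_range.mpr (by omega))
    rw [stepf_other j v x hxj hxj1] at hx
    exact hx (by
      by_contra h
      exact hxr (hv.2 (Finsupp.mem_support_iff.mpr h)))
/-! ### Chains -/

noncomputable def vtxs : Pt → List ℕ → List Pt
  | v, [] => [v]
  | v, j :: t => v :: vtxs (stepf j v) t

noncomputable def endp : Pt → List ℕ → Pt
  | v, [] => v
  | v, j :: t => endp (stepf j v) t

def chainOK : Pt → List ℕ → Prop
  | _, [] => True
  | v, j :: t => 1 ≤ v (j-1) ∧ chainOK (stepf j v) t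

@[simp] lemma vtxs_nil (v : Pt) : vtxs v [] = [v] := rfl
@[simp] lemma vtxs_cons (v : Pt) (j : ℕ) (t : List ℕ) :
    vtxs v (j :: t) = v :: vtxs (stepf j v) t := rfl
@[simp] lemma endp_nil (v : Pt) : endp v [] = v := rfl
@[simp] lemma endp_cons (v : Pt) (j : ℕ) (t : List ℕ) :
    endp v (j :: t) = endp (stepf j v) t := rfl
@[simp] lemma chainOK_nil (v : Pt) : chainOK v [] := trivial
@[simp] lemma chainOK_cons (v : Pt) (j : ℕ) (t : List ℕ) :
    chainOK v (j :: t) ↔ 1 ≤ v (j-1) ∧ chainOK (stepf j v) t := Iff.rfl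

lemma length_vtxs (v : Pt) (l : List ℕ) : (vtxs v l).length = l.length + 1 := by
  induction l generalizing v with
  | nil => rfl
  | cons j t ih => simp [ih]

lemma vtxs_ne_nil (v : Pt) (l : List ℕ) : vtxs v l ≠ [] := by
  cases l <;> simp

lemma self_mem_vtxs (v : Pt) (l : List ℕ) : v ∈ vtxs v l := by
  cases l <;> simp

lemma vtxs_append (v : Pt) (l₁ l₂ : List ℕ) :
    vtxs v (l₁ ++ l₂) = (vtxs v l₁).dropLast ++ vtxs (endp v l₁) l₂ := by
  induction l₁ generalizing v with
  | nil => simp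
  | cons j t ih =>
      simp only [List.cons_append, vtxs_cons, endp_cons, ih]
      rw [List.dropLast_cons_of_ne_nil (vtxs_ne_nil _ _)]
      rfl

lemma endp_append (v : Pt) (l₁ l₂ : List ℕ) :
    endp v (l₁ ++ l₂) = endp (endp v l₁) l₂ := by
  induction l₁ generalizing v with
  | nil => simp
  | cons j t ih => simp [ih]

lemma chainOK_append (v : Pt) (l₁ l₂ : List ℕ) :
    chainOK v (l₁ ++ l₂) ↔ chainOK v l₁ ∧ chainOK (endp v l₁) l₂ := by
  induction l₁ generalizing v with
  | nil => simp
  | cons j t ih => simp [ih, and_assoc]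

lemma endp_mem_vtxs (v : Pt) (l : List ℕ) : endp v l ∈ vtxs v l := by
  induction l generalizing v with
  | nil => simp
  | cons j t ih => simp [ih]

lemma vtxs_concat (v : Pt) (t : List ℕ) (a : ℕ) :
    vtxs v (t ++ [a]) = vtxs v t ++ [stepf a (endp v t)] := by
  rw [vtxs_append]
  have : vtxs v t = (vtxs v t).dropLast ++ [endp v t] := by
    induction t generalizing v with
    | nil => simp
    | cons j r ih =>
        simp only [vtxs_cons, endp_cons]
        rw [List.dropLast_cons_of_ne_nil (vtxs_ne_nil _ _)]
        rw [List.cons_append]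
        congr 1
        exact ih _
  conv_rhs => rw [this]
  simp

lemma vtxs_dropLast (v : Pt) (t : List ℕ) (a : ℕ) :
    (vtxs v (t ++ [a])).dropLast = vtxs v t := by
  rw [vtxs_concat, List.dropLast_concat]

/-- all vertices of a valid chain lie in the grid -/
lemma mem_TT_of_mem_vtxs {m N : ℕ} {v : Pt} {l : List ℕ} (hv : v ∈ TT m N)
    (hOK : chainOK v l) (hl : ∀ j ∈ l, 1 ≤ j ∧ j ≤ m) :
    ∀ w ∈ vtxs v l, w ∈ TT m N := by
  induction l generalizing v with
  | nil => intro w hw; simp at hw; rwa [hw]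
  | cons j t ih =>
      intro w hw
      rcases hOK with ⟨h1, h2⟩
      have hj := hl j (by simp)
      rcases List.mem_cons.mp hw with rfl | hw'
      · exact hv
      · exact ih (stepf_mem_TT hv hj.1 hj.2 h1) h2 (fun x hx => hl x (by simp [hx])) w hw'

lemma endp_mem_TT {m N : ℕ} {v : Pt} {l : List ℕ} (hv : v ∈ TT m N)
    (hOK : chainOK v l) (hl : ∀ j ∈ l, 1 ≤ j ∧ j ≤ m) : endp v l ∈ TT m N :=
  mem_TT_of_mem_vtxs hv hOK hl _ (endp_mem_vtxs v l)

/-- monotone increase: if no step lowers coordinate `c`, the coordinate is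
nondecreasing along the chain -/
lemma coord_le_endp {c : ℕ} {t : List ℕ} (hc : c + 1 ∉ t) (u : Pt) :
    ∀ w ∈ vtxs u t, w c ≤ (endp u t) c := by
  induction t generalizing u with
  | nil => intro w hw; simp at hw; simp [hw]
  | cons j r ih =>
      intro w hw
      have hj : j ≠ c + 1 := by intro h; exact hc (h ▸ List.mem_cons_self (a := j) (l := r))
      have hc' : c + 1 ∉ r := fun h => hc (List.mem_cons_of_mem j h)
      have hstep : u c ≤ (stepf j u) c := by
        rw [stepf_apply]; split_ifs <;> omega
      rcases List.mem_cons.mp hw with rfl | hw'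
      · exact le_trans (le_trans hstep (ih hc' _ _ (self_mem_vtxs _ _))) (by simp)
      · exact le_trans (ih hc' _ w hw') (by simp)

lemma coord_le_start {c : ℕ} {t : List ℕ} (hc : c ∉ t) (u : Pt) :
    ∀ w ∈ vtxs u t, w c ≤ u c := by
  induction t generalizing u with
  | nil => intro w hw; simp at hw; simp [hw]
  | cons j r ih =>
      intro w hw
      have hj : j ≠ c := by intro h; exact hc (h ▸ List.mem_cons_self (a := j) (l := r))
      have hstep : (stepf j u) c ≤ u c := by
        rw [stepf_apply]
        simp [Ne.symm hj]
        split_ifs <;> omega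
      rcases List.mem_cons.mp hw with rfl | hw'
      · exact le_refl _
      · exact le_trans (ih (fun h => hc (List.mem_cons_of_mem j h)) _ w hw') hstep
/-! ### Generic parity tools -/

lemma even_card_invol {α : Type*} [DecidableEq α] (f : α → α) (s : Finset α)
    (h1 : ∀ a ∈ s, f a ∈ s) (h2 : ∀ a ∈ s, f (f a) = a) (h3 : ∀ a ∈ s, f a ≠ a) :
    Even s.card := by
  induction s using Finset.strongInduction with
  | _ s ih =>
    rcases s.eq_empty_or_nonempty with rfl | ⟨a, ha⟩
    · simp
    · have hfa : f a ∈ s := h1 a ha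
      have hfane : f a ≠ a := h3 a ha
      have hfamem : f a ∈ s.erase a := Finset.mem_erase.mpr ⟨hfane, hfa⟩
      set s' := (s.erase a).erase (f a) with hs'
      have hsub : s' ⊆ s := (Finset.erase_subset _ _).trans (Finset.erase_subset _ _)
      have hssub : s' ⊂ s := Finset.ssubset_of_subset_of_ssubset
        (Finset.erase_subset _ _) (Finset.erase_ssubset ha)
      have h1' : ∀ b ∈ s', f b ∈ s' := by
        intro b hb
        have hb1 := Finset.mem_erase.mp hb
        have hb2 := Finset.mem_erase.mp hb1.2
        refine Finset.mem_erase.mpr ⟨?_, Finset.mem_erase.mpr ⟨?_, h1 b hb2.2⟩⟩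
        · intro h; exact hb2.1 (by rw [← h2 b hb2.2, h, h2 a ha])
        · intro h; exact hb1.1 (by rw [← h2 b hb2.2, h])
      have h2' : ∀ b ∈ s', f (f b) = b := fun b hb => h2 b (hsub hb)
      have h3' : ∀ b ∈ s', f b ≠ b := fun b hb => h3 b (hsub hb)
      have heven := ih s' hssub h1' h2' h3'
      have hc1 : (s.erase a).card = s.card - 1 := Finset.card_erase_of_mem ha
      have hc2 : s'.card = (s.erase a).card - 1 := Finset.card_erase_of_mem hfamem
      have hpos : 0 < s.card := Finset.card_pos.mpr ⟨a, ha⟩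
      have hpos2 : 0 < (s.erase a).card := Finset.card_pos.mpr ⟨f a, hfamem⟩
      rw [Nat.even_iff] at heven ⊢
      omega

/-! ### List counting helpers -/

lemma count_eq_card_filter (L : List ℕ) (c : ℕ) :
    L.count c = ((Finset.range L.length).filter fun k => L.getD k 0 = c).card := by
  induction L with
  | nil => simp
  | cons a t ih =>
      rw [Finset.card_filter, List.length_cons, Finset.sum_range_succ']
      simp only [List.getD_cons_succ, List.getD_cons_zero]
      rw [← Finset.card_filter, ← ih, List.count_cons]
      simp [beq_iff_eq]

lemma getD_mem {L : List ℕ} {k : ℕ} (hk : k < L.length) : L.getD k 0 ∈ L := by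
  rw [List.getD_eq_getElem L 0 hk]
  exact List.getElem_mem hk

lemma count_eraseIdx (L : List ℕ) (k : ℕ) (hk : k < L.length) (c : ℕ) :
    (L.eraseIdx k).count c = L.count c - (if L.getD k 0 = c then 1 else 0) := by
  set g := L.getD k 0 with hg
  have hL : L = L.take k ++ g :: L.drop (k+1) := by
    rw [hg, List.getD_eq_getElem L 0 hk]
    conv_lhs => rw [← List.take_append_drop k L]
    congr 1
    exact List.drop_eq_getElem_cons hk
  rw [List.eraseIdx_eq_take_drop_succ]
  conv_rhs => rw [hL]
  rw [List.count_append, List.count_append, List.count_cons]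
  simp only [beq_iff_eq]
  split_ifs <;> omega

lemma sum_count_eq_length (L : List ℕ) (s : Finset ℕ) (h : ∀ a ∈ L, a ∈ s) :
    ∑ c ∈ s, L.count c = L.length := by
  induction L with
  | nil => simp
  | cons a t ih =>
      have ha : a ∈ s := h a (List.mem_cons_self (a := a) (l := t))
      have ht : ∀ x ∈ t, x ∈ s := fun x hx => h x (List.mem_cons_of_mem a hx)
      simp only [List.count_cons, List.length_cons, beq_iff_eq]
      rw [Finset.sum_add_distrib, ih ht, Finset.sum_ite_eq s a (fun _ => 1), if_pos ha]

/-! ### The label-counting lemma -/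

lemma lab_count (d : ℕ) (L : List ℕ) (hlen : L.length = d + 1) (hlt : ∀ a ∈ L, a < d + 1) :
    (((Finset.range (d+1)).filter
        (fun k => Finset.range d ⊆ (L.eraseIdx k).toFinset)).card) % 2
      = if L.toFinset = Finset.range (d+1) then 1 else 0 := by
  have key : ∀ k, k < d + 1 →
      ((Finset.range d ⊆ (L.eraseIdx k).toFinset) ↔
        (∀ j, j < d → 1 ≤ L.count j - (if L.getD k 0 = j then 1 else 0))) := by
    intro k hk
    rw [Finset.subset_iff]
    constructor
    · intro h j hj
      have := h (Finset.mem_range.mpr hj)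
      rw [List.mem_toFinset, ← List.count_pos_iff, count_eraseIdx L k (by omega) j] at this
      omega
    · intro h x hx
      rw [List.mem_toFinset, ← List.count_pos_iff, count_eraseIdx L k (by omega) x]
      have := h x (Finset.mem_range.mp hx)
      omega
  by_cases hnd : L.Nodup
  · have hcard : L.toFinset.card = d + 1 := by
      rw [List.toFinset_card_of_nodup hnd, hlen]
    have htf : L.toFinset = Finset.range (d+1) := by
      apply Finset.eq_of_subset_of_card_le
      · intro x hx
        exact Finset.mem_range.mpr (hlt x (List.mem_toFinset.mp hx))
      · rw [hcard, Finset.card_range]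
    rw [if_pos htf]
    have hcount1 : ∀ c, c < d + 1 → L.count c = 1 := by
      intro c hc
      have hmem : c ∈ L := by
        rw [← List.mem_toFinset, htf]; exact Finset.mem_range.mpr hc
      have := List.nodup_iff_count_le_one.mp hnd c
      have := List.count_pos_iff.mpr hmem
      omega
    have hset : ((Finset.range (d+1)).filter
        (fun k => Finset.range d ⊆ (L.eraseIdx k).toFinset))
        = (Finset.range (d+1)).filter (fun k => L.getD k 0 = d) := by
      apply Finset.filter_congr
      intro k hk
      rw [Finset.mem_range] at hk
      rw [key k hk]
      have hg : L.getD k 0 < d + 1 := hlt _ (getD_mem (by omega))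
      constructor
      · intro h
        by_contra hne
        have hgd : L.getD k 0 < d := by omega
        have := h _ hgd
        rw [if_pos rfl, hcount1 _ (by omega)] at this
        omega
      · intro h j hj
        rw [h, hcount1 j (by omega)]
        have : d ≠ j := by omega
        simp [this]
    rw [hset, ← hlen, ← count_eq_card_filter, hcount1 d (by omega)]
  · have htf : L.toFinset ≠ Finset.range (d+1) := by
      intro h
      have h1 : L.toFinset.card < L.length := by
        rw [List.card_toFinset]
        have hsub := List.dedup_sublist L
        rcases Nat.lt_or_ge L.dedup.length L.length with h' | h'
        · exact h'
        · exact absurd ((List.Sublist.eq_of_length hsub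
            (le_antisymm (hsub.length_le) h')) ▸ L.nodup_dedup) hnd
      rw [h, Finset.card_range, hlen] at h1
      omega
    rw [if_neg htf]
    rw [← Nat.even_iff]
    by_cases hall : ∀ j, j < d → 0 < L.count j
    · obtain ⟨c0, hc0⟩ : ∃ c, 2 ≤ L.count c := by
        by_contra h
        push_neg at h
        exact hnd (List.nodup_iff_count_le_one.mpr (fun a => by have := h a; omega))
      have hsum : ∑ c ∈ Finset.range (d+1), L.count c = d + 1 := by
        rw [sum_count_eq_length L _ (fun a ha => Finset.mem_range.mpr (hlt a ha)), hlen]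
      have hc0d : c0 < d + 1 := by
        apply hlt
        rw [← List.count_pos_iff]
        omega
      -- sum decomposition
      have hins : Finset.range (d+1) = insert d (Finset.range d) := by
        rw [Finset.range_add_one]
      have hc0lt : c0 < d := by
        rcases Nat.lt_or_ge c0 d with h | h
        · exact h
        · exfalso
          have hc0d' : c0 = d := by omega
          rw [hc0d'] at hc0
          rw [hins, Finset.sum_insert (by simp)] at hsum
          have : (d:ℕ) ≤ ∑ c ∈ Finset.range d, L.count c := by
            calc (d:ℕ) = ∑ _c ∈ Finset.range d, 1 := by simp
            _ ≤ _ := Finset.sum_le_sum (fun i hi => hall i (Finset.mem_range.mp hi))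
          omega
      have hc0mem : c0 ∈ Finset.range d := Finset.mem_range.mpr hc0lt
      have hsplit : L.count d + (L.count c0 + ∑ c ∈ (Finset.range d).erase c0, L.count c)
          = d + 1 := by
        have h1 : L.count c0 + ∑ c ∈ (Finset.range d).erase c0, L.count c
            = ∑ c ∈ Finset.range d, L.count c :=
          Finset.add_sum_erase _ (fun c => L.count c) hc0mem
        rw [hins, Finset.sum_insert (by simp)] at hsum
        omega
      have herase_ge : (d - 1 : ℕ) ≤ ∑ c ∈ (Finset.range d).erase c0, L.count c := by
        calc (d - 1 : ℕ) = ((Finset.range d).erase c0).card := by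
              rw [Finset.card_erase_of_mem hc0mem, Finset.card_range]
        _ = ∑ _c ∈ (Finset.range d).erase c0, 1 := by simp
        _ ≤ _ := Finset.sum_le_sum (fun i hi =>
            hall i (Finset.mem_range.mp (Finset.mem_of_mem_erase hi)))
      have hcountd : L.count d = 0 ∧ L.count c0 = 2 ∧
          ∑ c ∈ (Finset.range d).erase c0, L.count c = d - 1 := by
        omega
      have hone : ∀ j, j < d → j ≠ c0 → L.count j = 1 := by
        intro j hj hjc
        have hjmem : j ∈ (Finset.range d).erase c0 :=
          Finset.mem_erase.mpr ⟨hjc, Finset.mem_range.mpr hj⟩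
        have h1 : L.count j + ∑ c ∈ ((Finset.range d).erase c0).erase j, L.count c
            = d - 1 := by
          have h0 : L.count j + ∑ c ∈ ((Finset.range d).erase c0).erase j, L.count c
              = ∑ c ∈ (Finset.range d).erase c0, L.count c :=
            Finset.add_sum_erase _ (fun c => L.count c) hjmem
          omega
        have h2 : (d - 2 : ℕ) ≤ ∑ c ∈ ((Finset.range d).erase c0).erase j, L.count c := by
          calc (d - 2 : ℕ) = (((Finset.range d).erase c0).erase j).card := by
                rw [Finset.card_erase_of_mem hjmem, Finset.card_erase_of_mem hc0mem,
                  Finset.card_range]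
                omega
          _ = ∑ _c ∈ (((Finset.range d).erase c0).erase j), 1 := by simp
          _ ≤ _ := Finset.sum_le_sum (fun i hi => hall i (Finset.mem_range.mp
              (Finset.mem_of_mem_erase (Finset.mem_of_mem_erase hi))))
        have := hall j hj
        omega
      have hset : ((Finset.range (d+1)).filter
          (fun k => Finset.range d ⊆ (L.eraseIdx k).toFinset))
          = (Finset.range (d+1)).filter (fun k => L.getD k 0 = c0) := by
        apply Finset.filter_congr
        intro k hk
        rw [Finset.mem_range] at hk
        rw [key k hk]
        have hgmem : L.getD k 0 ∈ L := getD_mem (by omega)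
        have hg : L.getD k 0 < d + 1 := hlt _ hgmem
        have hgd : L.getD k 0 ≠ d := by
          intro h
          have := List.count_pos_iff.mpr hgmem
          rw [h] at this
          omega
        constructor
        · intro h
          by_contra hne
          have := h _ (by omega : L.getD k 0 < d)
          rw [if_pos rfl] at this
          have := hone _ (by omega) hne
          omega
        · intro h j hj
          have hja := hall j hj
          rcases eq_or_ne (L.getD k 0) j with he | he
          · have hj2 : L.count j = 2 := by
              have hjc : j = c0 := by rw [← he, h]
              rw [hjc]; exact hcountd.2.1
            rw [if_pos he]; omega
          · rw [if_neg he]; omega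
      rw [hset, ← hlen, ← count_eq_card_filter, hcountd.2.1]
      exact even_two
    · push_neg at hall
      obtain ⟨j, hj, hcj⟩ := hall
      have hset : ((Finset.range (d+1)).filter
          (fun k => Finset.range d ⊆ (L.eraseIdx k).toFinset)) = ∅ := by
        rw [Finset.filter_eq_empty_iff]
        intro k hk
        rw [Finset.mem_range] at hk
        rw [key k hk]
        push_neg
        exact ⟨j, hj, by omega⟩
      simp [hset]
/-! ### Simplices -/

open scoped Classical in
noncomputable def perms (m : ℕ) : Finset (List ℕ) :=
  (List.permutations (List.range' 1 m)).toFinset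

lemma mem_perms {m : ℕ} {l : List ℕ} : l ∈ perms m ↔ l.Perm (List.range' 1 m) := by
  simp [perms, List.mem_permutations]

lemma perms_entry {m : ℕ} {l : List ℕ} (h : l ∈ perms m) : ∀ j ∈ l, 1 ≤ j ∧ j ≤ m := by
  intro j hj
  have := (mem_perms.mp h).mem_iff.mp hj
  rw [List.mem_range'_1] at this
  omega

lemma perms_nodup {m : ℕ} {l : List ℕ} (h : l ∈ perms m) : l.Nodup :=
  (mem_perms.mp h).nodup_iff.mpr (List.nodup_range' (s := 1) (n := m))

lemma perms_length {m : ℕ} {l : List ℕ} (h : l ∈ perms m) : l.length = m := by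
  rw [(mem_perms.mp h).length_eq, List.length_range']

open scoped Classical in
noncomputable def simps (m N : ℕ) : Finset (Pt × List ℕ) :=
  ((TT m N) ×ˢ perms m).filter fun p => chainOK p.1 p.2

lemma mem_simps {m N : ℕ} {p : Pt × List ℕ} :
    p ∈ simps m N ↔ p.1 ∈ TT m N ∧ p.2 ∈ perms m ∧ chainOK p.1 p.2 := by
  simp [simps, Finset.mem_filter, Finset.mem_product, and_assoc]

noncomputable def labsOf (lab : Pt → ℕ) (p : Pt × List ℕ) : List ℕ := (vtxs p.1 p.2).map lab

def isRB (m : ℕ) (lab : Pt → ℕ) (p : Pt × List ℕ) : Prop :=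
  (labsOf lab p).toFinset = Finset.range (m+1)

def isDoor (m : ℕ) (lab : Pt → ℕ) (p : Pt × List ℕ) (k : ℕ) : Prop :=
  Finset.range m ⊆ ((labsOf lab p).eraseIdx k).toFinset

lemma vtxs_simps_mem_TT {m N : ℕ} {p : Pt × List ℕ} (hp : p ∈ simps m N) :
    ∀ w ∈ vtxs p.1 p.2, w ∈ TT m N := by
  rw [mem_simps] at hp
  exact mem_TT_of_mem_vtxs hp.1 hp.2.2 (perms_entry hp.2.1)

lemma length_labsOf {m N : ℕ} {lab : Pt → ℕ} {p : Pt × List ℕ} (hp : p ∈ simps m N) :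
    (labsOf lab p).length = m + 1 := by
  rw [labsOf, List.length_map, length_vtxs, perms_length (mem_simps.mp hp).2.1]

lemma labsOf_lt {m N : ℕ} (hN : 1 ≤ N) {lab : Pt → ℕ}
    (hlab : ∀ v ∈ TT m N, 1 ≤ v (lab v)) {p : Pt × List ℕ} (hp : p ∈ simps m N) :
    ∀ a ∈ labsOf lab p, a < m + 1 := by
  intro a ha
  rw [labsOf, List.mem_map] at ha
  obtain ⟨w, hw, rfl⟩ := ha
  have hwTT := vtxs_simps_mem_TT hp w hw
  have h1 := hlab w hwTT
  have : lab w ∈ w.support := Finsupp.mem_support_iff.mpr (by omega)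
  exact Finset.mem_range.mp ((mem_TT.mp hwTT).2 this)

lemma map_eraseIdx {α β : Type*} (f : α → β) : ∀ (l : List α) (k : ℕ),
    (l.map f).eraseIdx k = (l.eraseIdx k).map f
  | [], _ => by simp
  | a :: t, 0 => by simp
  | a :: t, (k+1) => by simp [map_eraseIdx f t k]

/-- labels of the facet -/
lemma labsOf_eraseIdx (lab : Pt → ℕ) (p : Pt × List ℕ) (k : ℕ) :
    (labsOf lab p).eraseIdx k = ((vtxs p.1 p.2).eraseIdx k).map lab :=
  map_eraseIdx lab _ k

/-- a door's facet cannot lie on a face of index `< m` -/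
lemma door_not_face {m N : ℕ} {lab : Pt → ℕ}
    (hlab : ∀ v ∈ TT m N, 1 ≤ v (lab v)) {p : Pt × List ℕ} (hp : p ∈ simps m N)
    {k : ℕ} (hdoor : isDoor m lab p k) {c : ℕ} (hc : c < m)
    (hface : ∀ w ∈ (vtxs p.1 p.2).eraseIdx k, w c = 0) : False := by
  have hcmem : c ∈ ((labsOf lab p).eraseIdx k).toFinset :=
    hdoor (Finset.mem_range.mpr hc)
  rw [labsOf_eraseIdx, List.mem_toFinset, List.mem_map] at hcmem
  obtain ⟨w, hw, hwc⟩ := hcmem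
  have hwTT := vtxs_simps_mem_TT hp w (List.mem_of_mem_eraseIdx hw)
  have := hlab w hwTT
  rw [hwc] at this
  rw [hface w hw] at this
  omega

lemma filter_irrel {α : Type*} (p : α → Prop) (h1 h2 : DecidablePred p) (s : Finset α) :
    @Finset.filter α p h1 s = @Finset.filter α p h2 s :=
  congrArg (fun h : DecidablePred p => @Finset.filter α p h s) (Subsingleton.elim h1 h2)

/-! ### The door-counting identity -/

open scoped Classical in
lemma doors_card_mod (m N : ℕ) (hN : 1 ≤ N) (lab : Pt → ℕ)
    (hlab : ∀ v ∈ TT m N, 1 ≤ v (lab v)) :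
    (((simps m N) ×ˢ Finset.range (m+1)).filter
        (fun q => isDoor m lab q.1 q.2)).card % 2
      = ((simps m N).filter (isRB m lab)).card % 2 := by
  classical
  set A := ((simps m N) ×ˢ Finset.range (m+1)).filter (fun q => isDoor m lab q.1 q.2) with hA
  have hmem : ∀ q ∈ A, q.1 ∈ simps m N := by
    intro q hq
    rw [hA, Finset.mem_filter, Finset.mem_product] at hq
    exact hq.1.1
  rw [Finset.card_eq_sum_card_fiberwise hmem]
  have hfib : ∀ p ∈ simps m N, (A.filter (fun q => q.1 = p)).card
      = ((Finset.range (m+1)).filter (fun k => isDoor m lab p k)).card := by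
    intro p hp
    refine Finset.card_bij' (fun q _ => q.2) (fun k _ => (p, k)) ?_ ?_ ?_ ?_
    · intro q hq
      obtain ⟨hqA, hq1⟩ := Finset.mem_filter.mp hq
      rw [hA, Finset.mem_filter, Finset.mem_product] at hqA
      rw [Finset.mem_filter]
      rw [hq1] at hqA
      exact ⟨hqA.1.2, hqA.2⟩
    · intro k hk
      obtain ⟨hk1, hk2⟩ := Finset.mem_filter.mp hk
      refine Finset.mem_filter.mpr ⟨?_, rfl⟩
      rw [hA, Finset.mem_filter, Finset.mem_product]
      exact ⟨⟨hp, hk1⟩, hk2⟩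
    · intro q hq
      have h1 : q.1 = p := (Finset.mem_filter.mp hq).2
      exact Prod.ext h1.symm rfl
    · intro k _
      rfl
  rw [Finset.sum_congr rfl hfib, Finset.sum_nat_mod]
  have hterm : ∀ p ∈ simps m N,
      ((Finset.range (m+1)).filter (fun k => isDoor m lab p k)).card % 2
        = if isRB m lab p then 1 else 0 := by
    intro p hp
    have h := lab_count m (labsOf lab p) (length_labsOf hp) (labsOf_lt hN hlab hp)
    have e1 : ((Finset.range (m+1)).filter (fun k => isDoor m lab p k))
        = ((Finset.range (m+1)).filter
            (fun k => Finset.range m ⊆ ((labsOf lab p).eraseIdx k).toFinset)) := by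
      unfold isDoor
      exact filter_irrel _ _ _ _
    rw [e1, h]
    by_cases hrb : isRB m lab p
    · rw [if_pos hrb]; unfold isRB at hrb; rw [if_pos hrb]
    · rw [if_neg hrb]; unfold isRB at hrb; rw [if_neg hrb]
  rw [Finset.sum_congr rfl hterm, Finset.card_filter]
/-! ### Adjacent swaps and pivots -/

def swapAdj : ℕ → List ℕ → List ℕ
  | 0, x :: y :: t => y :: x :: t
  | i+1, x :: t => x :: swapAdj i t
  | _, l => l

@[simp] lemma swapAdj_zero_cons2 (x y : ℕ) (t : List ℕ) :
    swapAdj 0 (x :: y :: t) = y :: x :: t := rfl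
@[simp] lemma swapAdj_succ_cons (i : ℕ) (x : ℕ) (t : List ℕ) :
    swapAdj (i+1) (x :: t) = x :: swapAdj i t := rfl
@[simp] lemma swapAdj_nil (i : ℕ) : swapAdj i [] = [] := by cases i <;> rfl
@[simp] lemma swapAdj_zero_single (x : ℕ) : swapAdj 0 [x] = [x] := rfl

lemma swapAdj_perm (i : ℕ) (l : List ℕ) : (swapAdj i l).Perm l := by
  induction i generalizing l with
  | zero =>
      match l with
      | [] => simp
      | [x] => simp
      | x :: y :: t => exact List.Perm.swap x y t
  | succ i ih =>
      match l with
      | [] => simp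
      | x :: t => exact List.Perm.cons x (ih t)

lemma swapAdj_swapAdj (i : ℕ) (l : List ℕ) : swapAdj i (swapAdj i l) = l := by
  induction i generalizing l with
  | zero =>
      match l with
      | [] => rfl
      | [x] => rfl
      | x :: y :: t => rfl
  | succ i ih =>
      match l with
      | [] => rfl
      | x :: t => simp [ih t]

lemma swapAdj_ne (i : ℕ) (l : List ℕ) (hi : i + 1 < l.length) (hnd : l.Nodup) :
    swapAdj i l ≠ l := by
  induction i generalizing l with
  | zero =>
      match l with
      | x :: y :: t =>
        intro h
        simp only [swapAdj_zero_cons2, List.cons.injEq] at h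
        exact (List.nodup_cons.mp hnd).1 (h.1 ▸ List.mem_cons_self)
  | succ i ih =>
      match l with
      | x :: t =>
        intro h
        simp only [swapAdj_succ_cons, List.cons.injEq] at h
        exact ih t (by simpa using hi) (List.nodup_cons.mp hnd).2 h.2

lemma take_subset_take' {α : Type*} (l : List α) {m n : ℕ} (h : m ≤ n) :
    l.take m ⊆ l.take n := by
  intro a ha
  have he : l.take m = (l.take n).take m := by rw [List.take_take, Nat.min_eq_left h]
  rw [he] at ha
  exact List.take_subset _ _ ha

lemma getD_not_mem_take {l : List ℕ} {k : ℕ} (hnd : l.Nodup) (hk : k < l.length) :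
    l.getD k 0 ∉ l.take k := by
  have hd : l.getD k 0 ∈ l.drop k := by
    rw [List.getD_eq_getElem l 0 hk, List.drop_eq_getElem_cons hk]
    exact List.mem_cons_self
  exact fun hmem => (List.disjoint_take_drop hnd (le_refl k)) hmem hd

/-- swapping two adjacent steps: the good case -/
lemma swap_chain {v : Pt} {l : List ℕ} {i : ℕ}
    (hent : ∀ j ∈ l, 1 ≤ j) (hnd : l.Nodup) (hOK : chainOK v l) (hi : i + 1 < l.length)
    (hval : 1 ≤ (endp v (l.take i)) (l.getD (i+1) 0 - 1)) :
    chainOK v (swapAdj i l) ∧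
    (vtxs v (swapAdj i l)).eraseIdx (i+1) = (vtxs v l).eraseIdx (i+1) := by
  induction i generalizing v l with
  | zero =>
      rcases l with _ | ⟨x, l'⟩
      · simp at hi
      rcases l' with _ | ⟨y, t⟩
      · simp at hi
      · obtain ⟨h1, h2, h3⟩ : 1 ≤ v (x-1) ∧ 1 ≤ (stepf x v) (y-1) ∧
            chainOK (stepf y (stepf x v)) t := by
          simpa using hOK
        have hx1 : 1 ≤ x := hent x (by simp)
        have hy1 : 1 ≤ y := hent y (by simp)
        have hxy : x ≠ y := by
          intro h
          exact (List.nodup_cons.mp hnd).1 (h ▸ List.mem_cons_self)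
        have hval' : 1 ≤ v (y-1) := by simpa using hval
        have hcomm := stepf_comm x y hx1 hy1 hxy v h1 hval'
        constructor
        · refine ⟨hval', ?_, ?_⟩
          · rw [stepf_apply]
            split_ifs <;> omega
          · rw [← hcomm]
            exact h3
        · simp only [swapAdj_zero_cons2, vtxs_cons]
          rw [List.eraseIdx_cons_succ, List.eraseIdx_cons_succ,
            List.eraseIdx_cons_zero, List.eraseIdx_cons_zero, ← hcomm]
  | succ i ih =>
      rcases l with _ | ⟨x, r⟩
      · simp at hi
      · obtain ⟨h1, h2⟩ : 1 ≤ v (x-1) ∧ chainOK (stepf x v) r := hOK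
        have hi' : i + 1 < r.length := by simp at hi; omega
        have hval' : 1 ≤ (endp (stepf x v) (r.take i)) (r.getD (i+1) 0 - 1) := by
          simpa using hval
        obtain ⟨c1, c2⟩ := ih (fun j hj => hent j (List.mem_cons_of_mem x hj))
          (List.nodup_cons.mp hnd).2 h2 hi' hval'
        constructor
        · exact ⟨h1, c1⟩
        · simp only [swapAdj_succ_cons, vtxs_cons, List.eraseIdx_cons_succ]
          rw [c2]

/-- swapping two adjacent steps: the degenerate case means the facet lies on a face -/
lemma swap_bad {v : Pt} {l : List ℕ} {i : ℕ}
    (hent : ∀ j ∈ l, 1 ≤ j) (hnd : l.Nodup) (hOK : chainOK v l) (hi : i + 1 < l.length)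
    (hbad : (endp v (l.take i)) (l.getD (i+1) 0 - 1) = 0) :
    ∀ w ∈ (vtxs v l).eraseIdx (i+1), w (l.getD (i+1) 0 - 1) = 0 := by
  induction i generalizing v l with
  | zero =>
      rcases l with _ | ⟨x, l'⟩
      · simp at hi
      rcases l' with _ | ⟨y, t⟩
      · simp at hi
      · obtain ⟨h1, h2, h3⟩ : 1 ≤ v (x-1) ∧ 1 ≤ (stepf x v) (y-1) ∧
            chainOK (stepf y (stepf x v)) t := by
          simpa using hOK
        have hx1 : 1 ≤ x := hent x (by simp)
        have hy1 : 1 ≤ y := hent y (by simp)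
        have hxy : x ≠ y := by
          intro h
          exact (List.nodup_cons.mp hnd).1 (h ▸ List.mem_cons_self)
        have hbad' : v (y-1) = 0 := by simpa using hbad
        -- derive x = y - 1
        have hx_eq : x = y - 1 := by
          by_contra hne
          rw [stepf_apply] at h2
          have hne2 : x - 1 ≠ y - 1 := by omega
          rw [if_neg (by omega : x ≠ y - 1), if_neg hne2] at h2
          omega
        intro w hw
        simp only [List.getD_cons_succ, List.getD_cons_zero]
        simp only [vtxs_cons, List.eraseIdx_cons_succ, List.eraseIdx_cons_zero] at hw
        rcases List.mem_cons.mp hw with rfl | hw'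
        · exact hbad'
        · -- w in the suffix after the two steps
          have hz : (stepf y (stepf x v)) (y-1) = 0 := by
            rw [stepf_pred y hy1]
            rw [← hx_eq, stepf_self x hx1, hx_eq, hbad']
          have hxt : (y - 1) ∉ t := by
            rw [← hx_eq]
            intro hmem
            exact (List.nodup_cons.mp hnd).1 (List.mem_cons_of_mem y hmem)
          have := coord_le_start hxt (stepf y (stepf x v)) w hw'
          omega
  | succ i ih =>
      rcases l with _ | ⟨x, r⟩
      · simp at hi
      · obtain ⟨h1, h2⟩ : 1 ≤ v (x-1) ∧ chainOK (stepf x v) r := hOK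
        have hi' : i + 1 < r.length := by simp at hi; omega
        have hbad' : (endp (stepf x v) (r.take i)) (r.getD (i+1) 0 - 1) = 0 := by
          simpa using hbad
        intro w hw
        simp only [List.getD_cons_succ]
        simp only [vtxs_cons, List.eraseIdx_cons_succ] at hw
        rcases List.mem_cons.mp hw with heq | hw'
        · -- the head vertex: use monotonicity up to the bad endpoint
          rw [heq]
          set b := r.getD (i+1) 0 with hb
          have hb1 : 1 ≤ b := by
            apply hent
            rw [hb]
            exact List.mem_cons_of_mem x (getD_mem (by omega))
          have hbnot : b ∉ (x :: r).take (i+2) := by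
            have hbe : b = (x :: r).getD (i+2) 0 := by simp [hb]
            rw [hbe]
            exact getD_not_mem_take hnd (by simp at hi ⊢; omega)
          have hpre : b ∉ (x :: r).take (i+1) :=
            fun h => hbnot (take_subset_take' _ (by omega) h)
          have hpre' : (b - 1) + 1 ∉ (x :: r).take (i+1) := by
            rwa [show b - 1 + 1 = b by omega]
          have hmono := coord_le_endp hpre' v _ (self_mem_vtxs v ((x :: r).take (i+1)))
          have hend : endp v ((x :: r).take (i+1)) (b-1) = 0 := by
            rw [List.take_succ_cons, endp_cons]
            exact hbad'
          omega
        · exact ih (fun j hj => hent j (List.mem_cons_of_mem x hj))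
            (List.nodup_cons.mp hnd).2 h2 hi' hbad' w hw'
/-! ### End pivots -/

lemma unstepf_mem_TT {m N : ℕ} {v : Pt} (hv : v ∈ TT m N) {j : ℕ} (hj1 : 1 ≤ j) (hjm : j ≤ m)
    (hval : 1 ≤ v j) : unstepf j v ∈ TT m N := by
  rw [mem_TT] at hv ⊢
  constructor
  · rw [← hv.1]
    have hjmem : j ∈ Finset.range (m+1) := Finset.mem_range.mpr (by omega)
    have hne : j - 1 ≠ j := by omega
    have hj1mem : j - 1 ∈ (Finset.range (m+1)).erase j :=
      Finset.mem_erase.mpr ⟨hne, Finset.mem_range.mpr (by omega)⟩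
    rw [← Finset.sum_erase_add _ _ hjmem, ← Finset.sum_erase_add _ _ hjmem]
    rw [← Finset.sum_erase_add _ _ hj1mem, ← Finset.sum_erase_add _ _ hj1mem]
    have h1 : ∑ x ∈ ((Finset.range (m+1)).erase j).erase (j-1), (unstepf j v) x
        = ∑ x ∈ ((Finset.range (m+1)).erase j).erase (j-1), v x := by
      refine Finset.sum_congr rfl fun x hx => ?_
      rw [Finset.mem_erase, Finset.mem_erase] at hx
      rw [unstepf_apply, if_neg (Ne.symm hx.1), if_neg (Ne.symm hx.2.1)]
      omega
    have h2 : (unstepf j v) j = v j - 1 := by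
      rw [unstepf_apply, if_neg hne, if_pos rfl]
      omega
    have h3 : (unstepf j v) (j-1) = v (j-1) + 1 := by
      rw [unstepf_apply, if_pos rfl, if_neg (Ne.symm hne)]
      omega
    rw [h1, h2, h3]
    omega
  · intro x hx
    rw [Finsupp.mem_support_iff] at hx
    by_contra hxr
    have hxj : j ≠ x := by
      intro h; exact hxr (h ▸ Finset.mem_range.mpr (by omega))
    have hxj1 : j - 1 ≠ x := by
      intro h; exact hxr (h ▸ Finset.mem_range.mpr (by omega))
    rw [unstepf_apply, if_neg hxj1, if_neg hxj] at hx
    simp at hx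
    exact hxr (hv.2 (Finsupp.mem_support_iff.mpr (by omega)))

lemma eraseIdx_concat_self {α : Type*} (xs : List α) (y : α) :
    (xs ++ [y]).eraseIdx xs.length = xs := by
  rw [List.eraseIdx_append_of_length_le (le_refl xs.length)]
  simp

/-- pivot at `k = 0` -/
lemma pivot_zero {d N : ℕ} {v : Pt} {a : ℕ} {t : List ℕ}
    (hp : (v, a :: t) ∈ simps d N) (hz : 1 ≤ (endp (stepf a v) t) (a-1)) :
    (stepf a v, t ++ [a]) ∈ simps d N ∧
    (vtxs (stepf a v) (t ++ [a])).eraseIdx (t.length + 1) = (vtxs v (a :: t)).eraseIdx 0 := by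
  rw [mem_simps] at hp
  obtain ⟨hTT, hperm, hOK⟩ := hp
  obtain ⟨ha1, had⟩ := perms_entry hperm a (List.mem_cons_self)
  obtain ⟨h1, h2⟩ : 1 ≤ v (a-1) ∧ chainOK (stepf a v) t := hOK
  refine ⟨mem_simps.mpr ⟨stepf_mem_TT hTT ha1 had h1, ?_, ?_⟩, ?_⟩
  · exact mem_perms.mpr ((List.perm_append_singleton a t).trans (mem_perms.mp hperm))
  · rw [chainOK_append]
    exact ⟨h2, hz, trivial⟩
  · rw [vtxs_concat]
    have hlen : (vtxs (stepf a v) t).length = t.length + 1 := length_vtxs _ _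
    rw [← hlen, eraseIdx_concat_self]
    simp

/-- pivot at `k = last` -/
lemma pivot_last {d N : ℕ} {v : Pt} {a : ℕ} {t : List ℕ}
    (hp : (v, t ++ [a]) ∈ simps d N) (hva : 1 ≤ v a) :
    (unstepf a v, a :: t) ∈ simps d N ∧
    (vtxs (unstepf a v) (a :: t)).eraseIdx 0 = (vtxs v (t ++ [a])).eraseIdx (t.length + 1) := by
  rw [mem_simps] at hp
  obtain ⟨hTT, hperm, hOK⟩ := hp
  obtain ⟨ha1, had⟩ := perms_entry hperm a (by simp)
  rw [chainOK_append] at hOK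
  obtain ⟨hOKt, hOKa⟩ := hOK
  have hsu : stepf a (unstepf a v) = v := stepf_unstepf a ha1 v hva
  refine ⟨mem_simps.mpr ⟨unstepf_mem_TT hTT ha1 had hva, ?_, ?_⟩, ?_⟩
  · exact mem_perms.mpr (((List.perm_append_singleton a t).symm).trans (mem_perms.mp hperm))
  · refine ⟨?_, ?_⟩
    · rw [unstepf_apply, if_pos rfl, if_neg (by omega : a ≠ a - 1)]
      omega
    · rw [hsu]
      exact hOKt
  · rw [vtxs_cons, List.eraseIdx_cons_zero, hsu, vtxs_concat]
    have hlen : (vtxs v t).length = t.length + 1 := length_vtxs _ _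
    rw [← hlen, eraseIdx_concat_self]
/-! ### The pivot map -/

noncomputable def pivot (d : ℕ) (q : (Pt × List ℕ) × ℕ) : (Pt × List ℕ) × ℕ :=
  if q.2 = 0 then
    match q.1.2 with
    | [] => q
    | a :: t => ((stepf a q.1.1, t ++ [a]), d)
  else if q.2 = d then
    match q.1.2.getLast? with
    | none => q
    | some a => ((unstepf a q.1.1, a :: q.1.2.dropLast), 0)
  else ((q.1.1, swapAdj (q.2 - 1) q.1.2), q.2)

lemma pivot_eq_zero (d : ℕ) (v : Pt) (a : ℕ) (t : List ℕ) :
    pivot d ((v, a :: t), 0) = ((stepf a v, t ++ [a]), d) := by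
  simp [pivot]

lemma pivot_eq_last (d : ℕ) (hd : d ≠ 0) (v : Pt) (a : ℕ) (t : List ℕ) :
    pivot d ((v, t ++ [a]), d) = ((unstepf a v, a :: t), 0) := by
  simp [pivot, hd, List.getLast?_concat]

lemma pivot_eq_mid (d : ℕ) (v : Pt) (l : List ℕ) (k : ℕ) (h0 : k ≠ 0) (hdk : k ≠ d) :
    pivot d ((v, l), k) = ((v, swapAdj (k-1) l), k) := by
  simp [pivot, h0, hdk]

/-! ### The involution on interior doors -/

lemma pivot_master {d N : ℕ} (hd : 1 ≤ d) {lab : Pt → ℕ}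
    (hlab : ∀ v ∈ TT d N, 1 ≤ v (lab v))
    {p : Pt × List ℕ} {k : ℕ} (hp : p ∈ simps d N) (hk : k < d + 1)
    (hdoor : isDoor d lab p k)
    (hnb : ¬ ∀ w ∈ (vtxs p.1 p.2).eraseIdx k, w d = 0) :
    (pivot d (p, k)).1 ∈ simps d N ∧ (pivot d (p, k)).2 < d + 1 ∧
    (vtxs (pivot d (p, k)).1.1 (pivot d (p, k)).1.2).eraseIdx (pivot d (p, k)).2
      = (vtxs p.1 p.2).eraseIdx k ∧
    pivot d (pivot d (p, k)) = (p, k) ∧ pivot d (p, k) ≠ (p, k) := by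
  obtain ⟨v, l⟩ := p
  have hmem := mem_simps.mp hp
  obtain ⟨hTT, hperm, hOK⟩ := hmem
  have hlen : l.length = d := perms_length hperm
  have hnd : l.Nodup := perms_nodup hperm
  have hent := perms_entry hperm
  rcases Nat.eq_zero_or_pos k with rfl | hkpos
  · -- k = 0
    rcases l with _ | ⟨a, t⟩
    · simp at hlen; omega
    obtain ⟨h1, h2⟩ : 1 ≤ v (a-1) ∧ chainOK (stepf a v) t := hOK
    obtain ⟨ha1, had⟩ := hent a (List.mem_cons_self)
    have hfacet0 : (vtxs v (a :: t)).eraseIdx 0 = vtxs (stepf a v) t := by simp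
    have hz : 1 ≤ (endp (stepf a v) t) (a-1) := by
      by_contra hz
      have hz0 : (endp (stepf a v) t) (a-1) = 0 := by omega
      have hanot : (a - 1) + 1 ∉ t := by
        rw [show a - 1 + 1 = a by omega]
        exact fun h => (List.nodup_cons.mp hnd).1 h
      have hface : ∀ w ∈ (vtxs v (a :: t)).eraseIdx 0, w (a-1) = 0 := by
        intro w hw
        rw [hfacet0] at hw
        have := coord_le_endp hanot (stepf a v) w hw
        omega
      exact door_not_face hlab hp hdoor (by omega : a - 1 < d) hface
    obtain ⟨hS', hfac⟩ := pivot_zero hp hz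
    have hlent : t.length + 1 = d := by simp at hlen; omega
    rw [hlent] at hfac
    rw [pivot_eq_zero]
    refine ⟨hS', by omega, hfac, ?_, ?_⟩
    · rw [pivot_eq_last d (by omega) _ a t, unstepf_stepf a ha1 v h1]
    · intro h
      have := congrArg Prod.snd h
      simp at this
      omega
  · rcases Nat.lt_or_ge k d with hkd | hkd
    · -- middle case
      obtain ⟨i, rfl⟩ : ∃ i, k = i + 1 := ⟨k-1, by omega⟩
      have hi : i + 1 < l.length := by omega
      set b := l.getD (i+1) 0 with hb
      have hbl : b ∈ l := getD_mem (by omega)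
      obtain ⟨hb1, hbd⟩ := hent b hbl
      have hval : 1 ≤ (endp v (l.take i)) (b - 1) := by
        by_contra hv0
        have hv0' : (endp v (l.take i)) (l.getD (i+1) 0 - 1) = 0 := by
          rw [← hb]; omega
        have hface := swap_bad (fun j hj => (hent j hj).1) hnd hOK hi hv0'
        exact door_not_face hlab hp hdoor (by omega : b - 1 < d)
          (by rw [hb] at *; exact hface)
      obtain ⟨hOK', hfac⟩ := swap_chain (fun j hj => (hent j hj).1) hnd hOK hi (by rw [← hb]; exact hval)
      rw [pivot_eq_mid d v l (i+1) (by omega) (by omega), show i + 1 - 1 = i by omega]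
      refine ⟨?_, by omega, hfac, ?_, ?_⟩
      · refine mem_simps.mpr ⟨hTT, ?_, hOK'⟩
        exact mem_perms.mpr ((swapAdj_perm i l).trans (mem_perms.mp hperm))
      · rw [pivot_eq_mid d v (swapAdj i l) (i+1) (by omega) (by omega),
          show i + 1 - 1 = i by omega, swapAdj_swapAdj]
      · intro h
        have h1 := congrArg (fun q => q.1.2) h
        simp at h1
        exact swapAdj_ne i l hi hnd h1
    · -- k = d
      have hkd' : k = d := by omega
      subst hkd'
      rcases List.eq_nil_or_concat l with rfl | ⟨t, a, hconcat⟩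
      · simp at hlen; omega
      rw [List.concat_eq_append] at hconcat
      subst hconcat
      obtain ⟨ha1, had⟩ := hent a (by simp)
      have hlent : t.length + 1 = k := by simp at hlen; omega
      have hfacet0 : (vtxs v (t ++ [a])).eraseIdx k = vtxs v t := by
        rw [vtxs_concat, ← hlent, ← length_vtxs v t, eraseIdx_concat_self]
      have hOK' := (chainOK_append v t [a]).mp hOK
      have hanot : a ∉ t := by
        have := List.nodup_append'.mp hnd
        intro h
        exact this.2.2 h (List.mem_singleton_self a)
      have hva : 1 ≤ v a := by
        by_contra hva
        have hva0 : v a = 0 := by omega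
        have hface : ∀ w ∈ (vtxs v (t ++ [a])).eraseIdx k, w a = 0 := by
          intro w hw
          rw [hfacet0] at hw
          have := coord_le_start hanot v w hw
          omega
        rcases Nat.lt_or_ge a k with hak | hak
        · exact door_not_face hlab hp hdoor hak hface
        · have haeq : a = k := by omega
          subst haeq
          exact hnb hface
      obtain ⟨hS', hfac⟩ := pivot_last hp hva
      rw [hlent] at hfac
      rw [pivot_eq_last k (by omega) v a t]
      refine ⟨hS', by omega, by rw [hfac, hfacet0, ← hfacet0], ?_, ?_⟩
      · rw [pivot_eq_zero, stepf_unstepf a ha1 v hva]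
      · intro h
        have := congrArg Prod.snd h
        simp at this
        omega
/-! ### Boundary characterization -/

lemma coord_ge_start {c : ℕ} {t : List ℕ} (hc : c + 1 ∉ t) (u : Pt) :
    ∀ w ∈ vtxs u t, u c ≤ w c := by
  induction t generalizing u with
  | nil => intro w hw; simp at hw; simp [hw]
  | cons j r ih =>
      intro w hw
      have hj : j ≠ c + 1 := by intro h; exact hc (h ▸ List.mem_cons_self (a := j) (l := r))
      have hc' : c + 1 ∉ r := fun h => hc (List.mem_cons_of_mem j h)
      have hstep : u c ≤ (stepf j u) c := by
        rw [stepf_apply]; split_ifs <;> omega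
      rcases List.mem_cons.mp hw with rfl | hw'
      · exact le_refl _
      · exact le_trans hstep (ih hc' _ w hw')

lemma countP_eraseIdx_le (l : List Pt) (k : ℕ) (p : Pt → Bool) :
    l.countP p ≤ (l.eraseIdx k).countP p + 1 := by
  rcases Nat.lt_or_ge k l.length with hk | hk
  · have hL : l = l.take k ++ l.getD k 0 :: l.drop (k+1) := by
      conv_lhs => rw [← List.take_append_drop k l]
      congr 1
      rw [List.getD_eq_getElem l 0 hk]
      exact List.drop_eq_getElem_cons hk
    rw [List.eraseIdx_eq_take_drop_succ]
    conv_lhs => rw [hL]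
    rw [List.countP_append, List.countP_append, List.countP_cons]
    split_ifs <;> omega
  · rw [List.eraseIdx_of_length_le hk]; omega

lemma TT_down {m N : ℕ} {v : Pt} (hv : v ∈ TT (m+1) N) (h0 : v (m+1) = 0) :
    v ∈ TT m N := by
  rw [mem_TT] at hv ⊢
  constructor
  · rw [Finset.sum_range_succ, h0] at hv
    omega
  · intro x hx
    have h1 := hv.2 hx
    rw [Finset.mem_range] at h1 ⊢
    rcases Nat.lt_or_ge x (m+1) with h | h
    · exact h
    · exfalso
      have : x = m + 1 := by omega
      rw [Finsupp.mem_support_iff, this, h0] at hx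
      exact hx rfl

lemma range'_one_concat (m : ℕ) : List.range' 1 (m+1) = List.range' 1 m ++ [m+1] := by
  have h := (List.range'_concat (s := 1) (n := m) : List.range' 1 (m+1) = _)
  simpa [Nat.add_comm] using h

lemma bd_char {d N : ℕ} (hd : 1 ≤ d) {v : Pt} {l : List ℕ} {k : ℕ}
    (hp : (v, l) ∈ simps d N) (hk : k < d + 1)
    (hface : ∀ w ∈ (vtxs v l).eraseIdx k, w d = 0) :
    k = d ∧ l.dropLast ++ [d] = l := by
  have hmem := mem_simps.mp hp
  obtain ⟨hTT, hperm, hOK⟩ := hmem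
  have hlen : l.length = d := perms_length hperm
  have hnd : l.Nodup := perms_nodup hperm
  have hent := perms_entry hperm
  have hdl : d ∈ l := (mem_perms.mp hperm).mem_iff.mpr (List.mem_range'_1.mpr ⟨hd, by omega⟩)
  obtain ⟨t₁, t₂, rfl⟩ := List.append_of_mem hdl
  -- first show t₂ = []
  have ht₂ : t₂ = [] := by
    set u := endp v t₁ with hu
    set y := stepf d u with hy
    have hdec : vtxs v (t₁ ++ d :: t₂) = (vtxs v t₁).dropLast ++ u :: vtxs y t₂ := by
      rw [vtxs_append, ← hu, vtxs_cons, ← hy]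
    have hy1 : 1 ≤ y d := by
      rw [hy, stepf_self d hd]
      omega
    have hd1not : d + 1 ∉ t₂ := by
      intro h
      have := hent (d+1) (by simp [h])
      omega
    have hge : ∀ w ∈ vtxs y t₂, 1 ≤ w d :=
      fun w hw => le_trans hy1 (coord_ge_start hd1not y w hw)
    set P : Pt → Bool := fun w => decide (1 ≤ w d) with hP
    have hfull : t₂.length + 1 ≤ (vtxs v (t₁ ++ d :: t₂)).countP P := by
      rw [hdec, List.countP_append, List.countP_cons]
      have h1 : (vtxs y t₂).countP P = (vtxs y t₂).length := by
        rw [List.countP_eq_length]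
        intro w hw
        rw [hP]
        simpa using hge w hw
      rw [h1, length_vtxs]
      omega
    have hzero : ((vtxs v (t₁ ++ d :: t₂)).eraseIdx k).countP P = 0 := by
      rw [List.countP_eq_zero]
      intro w hw
      rw [hP]
      simp [hface w hw]
    have := countP_eraseIdx_le (vtxs v (t₁ ++ d :: t₂)) k P
    rw [hzero] at this
    have : t₂.length = 0 := by omega
    exact List.length_eq_zero_iff.mp this
  subst ht₂
  have hlt₁ : t₁.length + 1 = d := by simpa using hlen
  have hfacet : (vtxs v (t₁ ++ [d])).eraseIdx d = vtxs v t₁ := by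
    rw [vtxs_concat, ← hlt₁, ← length_vtxs v t₁, eraseIdx_concat_self]
  have hkd : k = d := by
    by_contra hne
    have hklt : k < d := by omega
    have hzmem : stepf d (endp v t₁) ∈ (vtxs v (t₁ ++ [d])).eraseIdx k := by
      rw [vtxs_concat, List.eraseIdx_append_of_lt_length (by rw [length_vtxs]; omega)]
      simp
    have := hface _ hzmem
    rw [stepf_self d hd] at this
    omega
  refine ⟨hkd, ?_⟩
  rw [List.dropLast_concat]

open scoped Classical in
lemma bd_card {m N : ℕ} (hN : 1 ≤ N) {lab : Pt → ℕ}
    (hlab : ∀ v ∈ TT (m+1) N, 1 ≤ v (lab v)) :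
    ((((simps (m+1) N) ×ˢ Finset.range (m+1+1)).filter
        (fun q => isDoor (m+1) lab q.1 q.2)).filter
          (fun q => ∀ w ∈ (vtxs q.1.1 q.1.2).eraseIdx q.2, w (m+1) = 0)).card
      = ((simps m N).filter (isRB m lab)).card := by
  have hlabm : ∀ v ∈ TT m N, 1 ≤ v (lab v) := fun v hv => hlab v (TT_mono hv)
  refine Finset.card_bij' (fun q _ => (q.1.1, q.1.2.dropLast))
    (fun p _ => ((p.1, p.2 ++ [m+1]), m+1)) ?_ ?_ ?_ ?_
  · -- forward membership
    intro q hq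
    obtain ⟨hqA, hface⟩ := Finset.mem_filter.mp hq
    obtain ⟨hqP, hdoor⟩ := Finset.mem_filter.mp hqA
    rw [Finset.mem_product] at hqP
    obtain ⟨hsim, hkr⟩ := hqP
    obtain ⟨⟨v, l⟩, k⟩ := q
    dsimp only at hface hdoor hsim hkr ⊢
    obtain ⟨hkd, hl⟩ := bd_char (by omega) hsim (Finset.mem_range.mp hkr) hface
    set t : List ℕ := l.dropLast with ht
    have hmem := mem_simps.mp hsim
    obtain ⟨hTT, hperm, hOK⟩ := hmem
    have hlen : l.length = m + 1 := perms_length hperm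
    have hlt : t.length = m := by
      rw [ht, List.length_dropLast, hlen]
      omega
    have hfacet : (vtxs v l).eraseIdx k = vtxs v t := by
      rw [hkd, ← hl, vtxs_concat, ← show t.length + 1 = m + 1 by omega,
        ← length_vtxs v t, eraseIdx_concat_self]
    have hOKt : chainOK v t := by
      have := hOK
      rw [← hl, chainOK_append] at this
      exact this.1
    have hvTT : v ∈ TT m N := by
      refine TT_down hTT ?_
      refine hface v ?_
      rw [hfacet]
      exact self_mem_vtxs v t
    have hpermt : t ∈ perms m := by
      rw [mem_perms]
      have := mem_perms.mp hperm
      rw [← hl, range'_one_concat] at this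
      exact (List.perm_append_right_iff [m+1]).mp this
    have hsimpt : (v, t) ∈ simps m N := mem_simps.mpr ⟨hvTT, hpermt, hOKt⟩
    rw [Finset.mem_filter]
    refine ⟨hsimpt, ?_⟩
    unfold isRB
    refine Finset.Subset.antisymm ?_ ?_
    · intro x hx
      exact Finset.mem_range.mpr (labsOf_lt hN hlabm hsimpt x (List.mem_toFinset.mp hx))
    · have hd2 := hdoor
      unfold isDoor at hd2
      rw [labsOf_eraseIdx, hfacet] at hd2
      exact hd2
  · -- backward membership
    intro p hp
    obtain ⟨hsim, hrb⟩ := Finset.mem_filter.mp hp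
    obtain ⟨v, t⟩ := p
    dsimp only at hsim hrb ⊢
    have hmem := mem_simps.mp hsim
    obtain ⟨hTT, hperm, hOK⟩ := hmem
    have hlt : t.length = m := perms_length hperm
    have hent := perms_entry hperm
    have hvert : ∀ w ∈ vtxs v t, w ∈ TT m N := vtxs_simps_mem_TT hsim
    have hval : 1 ≤ (endp v t) m := by
      by_contra hv0
      have hv0' : (endp v t) m = 0 := by omega
      have hm1not : m + 1 ∉ t := by
        intro h
        have := hent (m+1) h
        omega
      have hface : ∀ w ∈ vtxs v t, w m = 0 := by
        intro w hw
        have := coord_le_endp (c := m) hm1not v w hw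
        omega
      have hmmem : m ∈ (labsOf lab (v, t)).toFinset := by
        unfold isRB at hrb
        rw [hrb]
        exact Finset.mem_range.mpr (by omega)
      rw [List.mem_toFinset] at hmmem
      unfold labsOf at hmmem
      rw [List.mem_map] at hmmem
      obtain ⟨w, hw, hwm⟩ := hmmem
      have h1 := hlab w (TT_mono (hvert w hw))
      rw [hwm, hface w hw] at h1
      omega
    have hsim' : (v, t ++ [m+1]) ∈ simps (m+1) N := by
      refine mem_simps.mpr ⟨TT_mono hTT, ?_, ?_⟩
      · rw [mem_perms, range'_one_concat]
        exact (mem_perms.mp hperm).append_right [m+1]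
      · rw [chainOK_append]
        refine ⟨hOK, ?_, trivial⟩
        simpa using hval
    have hfacet : (vtxs v (t ++ [m+1])).eraseIdx (m+1) = vtxs v t := by
      rw [vtxs_concat, ← show t.length + 1 = m + 1 by omega,
        ← length_vtxs v t, eraseIdx_concat_self]
    rw [Finset.mem_filter, Finset.mem_filter, Finset.mem_product]
    refine ⟨⟨⟨hsim', Finset.mem_range.mpr (by omega)⟩, ?_⟩, ?_⟩
    · unfold isDoor
      rw [labsOf_eraseIdx]
      show Finset.range (m+1) ⊆ (((vtxs v (t ++ [m+1])).eraseIdx (m+1)).map lab).toFinset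
      rw [hfacet]
      unfold isRB at hrb
      unfold labsOf at hrb
      rw [hrb]
    · intro w hw
      show w (m+1) = 0
      rw [hfacet] at hw
      exact apply_eq_zero_of_mem_TT (hvert w hw) (le_refl _)
  · -- left inverse
    intro q hq
    obtain ⟨hqA, hface⟩ := Finset.mem_filter.mp hq
    obtain ⟨hqP, hdoor⟩ := Finset.mem_filter.mp hqA
    rw [Finset.mem_product] at hqP
    obtain ⟨⟨v, l⟩, k⟩ := q
    dsimp only at hface hqP ⊢
    obtain ⟨hkd, hl⟩ := bd_char (by omega) hqP.1 (Finset.mem_range.mp hqP.2) hface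
    refine Prod.ext (Prod.ext rfl ?_) ?_
    · exact hl
    · exact hkd.symm
  · -- right inverse
    intro p hp
    dsimp only
    refine Prod.ext rfl ?_
    show (p.2 ++ [m+1]).dropLast = p.2
    rw [List.dropLast_concat]
/-! ### Sperner's lemma -/

open scoped Classical in
theorem sperner (N : ℕ) (hN : 1 ≤ N) (lab : Pt → ℕ) :
    ∀ m, (∀ v ∈ TT m N, 1 ≤ v (lab v)) →
      ((simps m N).filter (isRB m lab)).card % 2 = 1 := by
  intro m
  induction m with
  | zero =>
      intro hlab
      have hT : TT 0 N = {Finsupp.single 0 N} := by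
        ext f
        rw [mem_TT, Finset.mem_singleton]
        constructor
        · rintro ⟨hsum, hsupp⟩
          ext x
          rcases eq_or_ne x 0 with rfl | hx
          · rw [Finsupp.single_apply, if_pos rfl]
            simpa using hsum
          · rw [Finsupp.single_apply, if_neg (fun h => hx h.symm)]
            by_contra h
            have h2 := hsupp (Finsupp.mem_support_iff.mpr h)
            rw [Finset.mem_range] at h2
            omega
        · rintro rfl
          constructor
          · simp
          · intro x hx
            rw [Finsupp.mem_support_iff, Finsupp.single_apply] at hx
            rw [Finset.mem_range]
            by_contra h2
            rw [if_neg (by omega : (0:ℕ) ≠ x)] at hx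
            exact hx rfl
      have hsimps : simps 0 N = {(Finsupp.single 0 N, [])} := by
        ext p
        rw [mem_simps, Finset.mem_singleton]
        constructor
        · rintro ⟨h1, h2, _⟩
          have hl : p.2 = [] := List.length_eq_zero_iff.mp (perms_length h2)
          have hv : p.1 = Finsupp.single 0 N := by
            rw [hT] at h1
            exact Finset.mem_singleton.mp h1
          exact Prod.ext hv hl
        · rintro rfl
          refine ⟨by rw [hT]; exact Finset.mem_singleton_self _, ?_, trivial⟩
          rw [mem_perms]
          simp
      have hrb : isRB 0 lab (Finsupp.single 0 N, []) := by
        have h1 := hlab (Finsupp.single 0 N) (by rw [hT]; exact Finset.mem_singleton_self _)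
        have h0 : lab (Finsupp.single 0 N) = 0 := by
          by_contra h
          rw [Finsupp.single_apply, if_neg (by omega : (0:ℕ) ≠ lab (Finsupp.single 0 N))] at h1
          omega
        unfold isRB labsOf
        rw [vtxs_nil]
        simp [h0]
      rw [hsimps, Finset.filter_singleton, if_pos hrb]
      simp
  | succ m ih =>
      intro hlab
      have hlabm : ∀ v ∈ TT m N, 1 ≤ v (lab v) := fun v hv => hlab v (TT_mono hv)
      have hIH := ih hlabm
      set A := ((simps (m+1) N) ×ˢ Finset.range (m+1+1)).filter
        (fun q => isDoor (m+1) lab q.1 q.2) with hA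
      set face : ((Pt × List ℕ) × ℕ) → Prop :=
        fun q => ∀ w ∈ (vtxs q.1.1 q.1.2).eraseIdx q.2, w (m+1) = 0 with hface
      have hsplit := Finset.card_filter_add_card_filter_not (s := A) (p := face)
      have heven : Even ((A.filter (fun q => ¬ face q)).card) := by
        apply even_card_invol (pivot (m+1))
        · intro q hq
          obtain ⟨hqA, hnb⟩ := Finset.mem_filter.mp hq
          rw [hA, Finset.mem_filter, Finset.mem_product] at hqA
          obtain ⟨⟨hsim, hkr⟩, hdoor⟩ := hqA
          have hmaster := pivot_master (by omega : 1 ≤ m + 1) hlab hsim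
            (Finset.mem_range.mp hkr) hdoor hnb
          obtain ⟨hS, hk2, hfac, _, _⟩ := hmaster
          rw [Finset.mem_filter, hA, Finset.mem_filter, Finset.mem_product]
          refine ⟨⟨⟨hS, Finset.mem_range.mpr hk2⟩, ?_⟩, ?_⟩
          · unfold isDoor
            rw [labsOf_eraseIdx, hfac, ← labsOf_eraseIdx]
            exact hdoor
          · rw [hface]
            intro hall
            rw [hfac] at hall
            exact hnb hall
        · intro q hq
          obtain ⟨hqA, hnb⟩ := Finset.mem_filter.mp hq
          rw [hA, Finset.mem_filter, Finset.mem_product] at hqA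
          obtain ⟨⟨hsim, hkr⟩, hdoor⟩ := hqA
          have hmaster := pivot_master (by omega : 1 ≤ m + 1) hlab hsim
            (Finset.mem_range.mp hkr) hdoor hnb
          exact hmaster.2.2.2.1
        · intro q hq
          obtain ⟨hqA, hnb⟩ := Finset.mem_filter.mp hq
          rw [hA, Finset.mem_filter, Finset.mem_product] at hqA
          obtain ⟨⟨hsim, hkr⟩, hdoor⟩ := hqA
          have hmaster := pivot_master (by omega : 1 ≤ m + 1) hlab hsim
            (Finset.mem_range.mp hkr) hdoor hnb
          exact hmaster.2.2.2.2
      have hbd : (A.filter face).card = ((simps m N).filter (isRB m lab)).card := by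
        exact bd_card hN hlab
      have hdoors := doors_card_mod (m+1) N hN lab hlab
      rw [← hA] at hdoors
      rw [← hdoors, ← hsplit]
      rcases heven with ⟨r, hr⟩
      omega
/-! ### The embedding into `Qinf` -/

def SS (f : Pt) : Finset ℕ := f.support.biUnion (fun j => (Finset.range (f j)).image (Nat.pair j))

lemma mem_SS {f : Pt} {x : ℕ} : x ∈ SS f ↔ (Nat.unpair x).2 < f (Nat.unpair x).1 := by
  constructor
  · intro hx
    rw [SS, Finset.mem_biUnion] at hx
    obtain ⟨j, _, hx2⟩ := hx
    rw [Finset.mem_image] at hx2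
    obtain ⟨t, ht, rfl⟩ := hx2
    rw [Nat.unpair_pair]
    exact Finset.mem_range.mp ht
  · intro hx
    rw [SS, Finset.mem_biUnion]
    refine ⟨(Nat.unpair x).1, ?_, ?_⟩
    · rw [Finsupp.mem_support_iff]
      omega
    · rw [Finset.mem_image]
      exact ⟨(Nat.unpair x).2, Finset.mem_range.mpr hx, Nat.pair_unpair x⟩

noncomputable def emb (f : Pt) : Qinf := Finsupp.indicator (SS f) (fun _ _ => 1)

lemma emb_apply (f : Pt) (x : ℕ) : emb f x = if x ∈ SS f then 1 else 0 := by
  rw [emb, Finsupp.indicator_apply]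
  split_ifs <;> rfl

lemma mem_support_emb_sub {f g : Pt} {x : ℕ} :
    x ∈ (emb f - emb g).support ↔
      ((Nat.unpair x).2 < f (Nat.unpair x).1 ↔ ¬ (Nat.unpair x).2 < g (Nat.unpair x).1) := by
  rw [Finsupp.mem_support_iff, Finsupp.sub_apply, emb_apply, emb_apply]
  rw [← @mem_SS f x, ← @mem_SS g x]
  by_cases hf : x ∈ SS f <;> by_cases hg : x ∈ SS g <;> simp [hf, hg] <;> decide

/-- the key distance formula -/
lemma Qdist_emb (f g : Pt) :
    Qdist (emb f) (emb g)
      = ∑ j ∈ f.support ∪ g.support, (max (f j) (g j) - min (f j) (g j)) := by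
  have hsupp : (emb f - emb g).support
      = (f.support ∪ g.support).biUnion
          (fun j => ((Finset.range (max (f j) (g j))) \ (Finset.range (min (f j) (g j)))).image
            (Nat.pair j)) := by
    ext x
    rw [mem_support_emb_sub, Finset.mem_biUnion]
    constructor
    · intro h
      refine ⟨(Nat.unpair x).1, ?_, ?_⟩
      · rw [Finset.mem_union, Finsupp.mem_support_iff, Finsupp.mem_support_iff]
        omega
      · rw [Finset.mem_image]
        refine ⟨(Nat.unpair x).2, ?_, Nat.pair_unpair x⟩
        rw [Finset.mem_sdiff, Finset.mem_range, Finset.mem_range]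
        omega
    · rintro ⟨j, _, hx⟩
      rw [Finset.mem_image] at hx
      obtain ⟨t, ht, rfl⟩ := hx
      rw [Finset.mem_sdiff, Finset.mem_range, Finset.mem_range] at ht
      simp only [Nat.unpair_pair]
      omega
  rw [Qdist, hsupp, Finset.card_biUnion]
  · refine Finset.sum_congr rfl fun j _ => ?_
    rw [Finset.card_image_of_injective _ (fun a b h => (Nat.pair_eq_pair.mp h).2),
      Finset.card_sdiff_of_subset (Finset.range_subset_range.mpr (by omega)), Finset.card_range,
      Finset.card_range]
  · intro j1 _ j2 _ hne
    simp only [Function.onFun]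
    rw [Finset.disjoint_left]
    intro x hx1 hx2
    rw [Finset.mem_image] at hx1 hx2
    obtain ⟨t1, _, rfl⟩ := hx1
    obtain ⟨t2, _, ht2⟩ := hx2
    exact hne ((Nat.pair_eq_pair.mp ht2.symm).1)

lemma coord_le_Qdist (f g : Pt) (i : ℕ) : f i ≤ g i + Qdist (emb f) (emb g) := by
  rw [Qdist_emb]
  by_cases hi : i ∈ f.support ∪ g.support
  · have h1 : (max (f i) (g i) - min (f i) (g i))
        ≤ ∑ j ∈ f.support ∪ g.support, (max (f j) (g j) - min (f j) (g j)) :=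
      Finset.single_le_sum (f := fun j => max (f j) (g j) - min (f j) (g j))
        (fun j _ => Nat.zero_le _) hi
    omega
  · rw [Finset.mem_union, Finsupp.mem_support_iff, Finsupp.mem_support_iff] at hi
    push_neg at hi
    omega

lemma Qdist_step_le (u : Pt) (j : ℕ) : Qdist (emb u) (emb (stepf j u)) ≤ 2 := by
  rw [Qdist_emb]
  set w := stepf j u with hw
  set U := u.support ∪ w.support with hU
  have hzero : ∀ x ∈ U, x ∉ (U.filter (fun x => x = j ∨ x = j - 1)) →
      (max (u x) (w x) - min (u x) (w x)) = 0 := by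
    intro x hx hxf
    rw [Finset.mem_filter] at hxf
    push_neg at hxf
    have := hxf hx
    have heq : w x = u x := by
      rw [hw]
      exact stepf_other j u x (this.1) (this.2)
    omega
  rw [← Finset.sum_subset (Finset.filter_subset _ _) hzero]
  calc ∑ x ∈ U.filter (fun x => x = j ∨ x = j - 1), (max (u x) (w x) - min (u x) (w x))
      ≤ ∑ x ∈ U.filter (fun x => x = j ∨ x = j - 1), 1 := by
        refine Finset.sum_le_sum fun x hx => ?_
        rw [Finset.mem_filter] at hx
        rcases hx.2 with rfl | rfl
        · rw [hw, stepf_apply]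
          split_ifs <;> omega
        · rw [hw, stepf_apply]
          split_ifs <;> omega
    _ = (U.filter (fun x => x = j ∨ x = j - 1)).card := by simp
    _ ≤ ({j, j-1} : Finset ℕ).card := by
        refine Finset.card_le_card ?_
        intro x hx
        rw [Finset.mem_filter] at hx
        rcases hx.2 with rfl | rfl <;> simp
    _ ≤ 2 := Finset.card_insert_le _ _ |>.trans (by simp)

lemma Qdist_triangle (a b c : Qinf) : Qdist a c ≤ Qdist a b + Qdist b c := by
  have hsub : (a - c).support ⊆ (a - b).support ∪ (b - c).support := by
    intro x hx
    rw [Finsupp.mem_support_iff, Finsupp.sub_apply] at hx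
    rw [Finset.mem_union, Finsupp.mem_support_iff, Finsupp.mem_support_iff,
      Finsupp.sub_apply, Finsupp.sub_apply]
    by_contra h
    push_neg at h
    have h1 : a x = b x := sub_eq_zero.mp h.1
    have h2 : b x = c x := sub_eq_zero.mp h.2
    exact hx (by rw [h1, h2, sub_self])
  exact le_trans (Finset.card_le_card hsub) (Finset.card_union_le _ _)

lemma chain_dist {l : List ℕ} : ∀ {v : Pt}, ∀ w ∈ vtxs v l, Qdist (emb v) (emb w) ≤ 2 * l.length := by
  induction l with
  | nil =>
      intro v w hw
      simp at hw
      simp [hw, Qdist]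
  | cons j t ih =>
      intro v w hw
      rcases List.mem_cons.mp hw with rfl | hw'
      · simp [Qdist]
      · calc Qdist (emb v) (emb w)
            ≤ Qdist (emb v) (emb (stepf j v)) + Qdist (emb (stepf j v)) (emb w) :=
              Qdist_triangle _ _ _
          _ ≤ 2 + 2 * t.length := Nat.add_le_add (Qdist_step_le v j) (ih w hw')
          _ ≤ 2 * (j :: t).length := by simp [List.length_cons]; ring_nf; omega
/-! ### Main theorem -/

/-- A subset of `Qinf` is open (for the ℓ¹ metric) if it contains a ball around
each of its points. -/
def QIsOpen (U : Set Qinf) : Prop :=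
  ∀ x ∈ U, ∃ ε : ℝ, 0 < ε ∧ ∀ y : Qinf, (Qdist x y : ℝ) < ε → y ∈ U

/-- `Q^∞` has infinite asymptotic dimension: for every `n` there exists `R > 0`
such that every countable cover of `Q^∞` by open sets of uniformly bounded diameter
has a ball of radius `R` meeting at least `n + 2` of its members. -/
theorem stmt2 (n : ℕ) :
    ∃ R : ℝ, 0 < R ∧
      ∀ U : ℕ → Set Qinf,
        (∀ i, QIsOpen (U i)) →
        (∀ x : Qinf, ∃ i, x ∈ U i) →
        (∃ D : ℝ, ∀ i, ∀ x ∈ U i, ∀ y ∈ U i, (Qdist x y : ℝ) ≤ D) →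
        ∃ x : Qinf, ∃ s : Finset ℕ, n + 2 ≤ s.card ∧
          ∀ i ∈ s, ∃ y ∈ U i, (Qdist x y : ℝ) < R := by
  classical
  refine ⟨2*(n+1) + 1, by positivity, ?_⟩
  intro U _hopen hcover hbound
  obtain ⟨D, hD⟩ := hbound
  set m := n + 1 with hm
  set D' : ℕ := ⌈D⌉₊ with hD'
  have hDD' : ∀ (i : ℕ) (a b : Qinf), a ∈ U i → b ∈ U i → Qdist a b ≤ D' := by
    intro i a b ha hb
    have h1 := hD i a ha b hb
    have h2 : (Qdist a b : ℝ) ≤ (D' : ℝ) := le_trans h1 (Nat.le_ceil D)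
    exact_mod_cast h2
  set N := (m + 1) * (D' + 1) with hNdef
  have hN1 : 1 ≤ N := by
    have : 0 < (m + 1) * (D' + 1) := Nat.mul_pos (by omega) (by omega)
    omega
  have hc : ∀ v : Pt, ∃ i, emb v ∈ U i := fun v => hcover (emb v)
  choose c hcmem using hc
  set G : ℕ → ℕ := fun i =>
    if h : ∃ jj, ∀ w ∈ TT m N, w jj = 0 → emb w ∉ U i then h.choose else 0 with hG
  set lab : Pt → ℕ := fun v => G (c v) with hlabdef
  have hexist : ∀ v ∈ TT m N, ∃ jj, ∀ w ∈ TT m N, w jj = 0 → emb w ∉ U (c v) := by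
    intro v hv
    by_contra hno
    push_neg at hno
    choose w hw1 hw2 hw3 using hno
    have hbnd : ∀ x ∈ Finset.range (m+1), v x ≤ D' := by
      intro x _
      have hq : Qdist (emb v) (emb (w x)) ≤ D' := hDD' (c v) _ _ (hcmem v) (hw3 x)
      have hcoord := coord_le_Qdist v (w x) x
      rw [hw2 x] at hcoord
      omega
    have hsum : N ≤ (m+1) * D' := by
      have h1 := (mem_TT.mp hv).1
      calc N = ∑ x ∈ Finset.range (m+1), v x := h1.symm
        _ ≤ ∑ _x ∈ Finset.range (m+1), D' := Finset.sum_le_sum hbnd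
        _ = (m+1) * D' := by rw [Finset.sum_const, Finset.card_range, smul_eq_mul]
    rw [hNdef, Nat.mul_succ] at hsum
    omega
  have hlab : ∀ v ∈ TT m N, 1 ≤ v (lab v) := by
    intro v hv
    have he := hexist v hv
    have hspec : ∀ w ∈ TT m N, w (G (c v)) = 0 → emb w ∉ U (c v) := by
      rw [hG]
      dsimp only
      rw [dif_pos he]
      exact he.choose_spec
    rw [hlabdef]
    dsimp only
    by_contra h0
    exact hspec v hv (by omega) (hcmem v)
  have hsp := sperner N hN1 lab m hlab
  have hne : ((simps m N).filter (isRB m lab)).Nonempty := Finset.card_pos.mp (by omega)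
  obtain ⟨p, hp⟩ := hne
  obtain ⟨hpsim, hprb⟩ := Finset.mem_filter.mp hp
  obtain ⟨v, l⟩ := p
  have hpm := mem_simps.mp hpsim
  have hlen : l.length = m := perms_length hpm.2.1
  have hrb2 : ((vtxs v l).map lab).toFinset = Finset.range (m+1) := hprb
  have hLL : ((vtxs v l).map lab).Nodup := by
    have hlength : ((vtxs v l).map lab).length = m + 1 := by
      rw [List.length_map, length_vtxs, hlen]
    have hcard : ((vtxs v l).map lab).toFinset.card = m + 1 := by
      rw [hrb2, Finset.card_range]
    rw [List.card_toFinset] at hcard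
    have hsub := List.dedup_sublist ((vtxs v l).map lab)
    have heq := List.Sublist.eq_of_length hsub (by omega)
    rw [← List.dedup_eq_self]
    exact heq
  have hcinj : ((vtxs v l).map c).Nodup := by
    have hmm : (vtxs v l).map lab = ((vtxs v l).map c).map G := by
      rw [List.map_map]
      rfl
    rw [hmm] at hLL
    exact List.Nodup.of_map G hLL
  refine ⟨emb v, ((vtxs v l).map c).toFinset, ?_, ?_⟩
  · rw [List.toFinset_card_of_nodup hcinj, List.length_map, length_vtxs, hlen]
  · intro i hi
    rw [List.mem_toFinset, List.mem_map] at hi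
    obtain ⟨w, hw, rfl⟩ := hi
    refine ⟨emb w, hcmem w, ?_⟩
    have hdist : Qdist (emb v) (emb w) ≤ 2 * (n+1) := by
      have h := chain_dist w hw
      rw [hlen, hm] at h
      exact h
    have hcast : (Qdist (emb v) (emb w) : ℝ) ≤ 2*((n:ℝ)+1) := by exact_mod_cast hdist
    push_cast
    linarith
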